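/- Let S = k[x₁,…,xₙ], d a degree sequence with dₙ < ∞, and ℘ = (x₁^{d₁},…,xₙ^{dₙ}). Let I be a monomial ideal with ℘ ⊊ I ⊊ S and J = ℘ : I. Then I is a d-lex-plus-powers ideal if and only if J is a d-lex-plus-powers ideal. -/

import Mathlib

open MvPolynomial

/-- total degree of an exponent vector -/
def expDeg {n : ℕ} (m : Fin n →₀ ℕ) : ℕ := m.sum fun _ e => e

/-- `u >_lex v` for the lexicographic order with `x₁ > x₂ > ⋯ > xₙ`
(variables indexed so that `X 0` is the largest). -/
def LexGT {n : ℕ} (u v : Fin n →₀ ℕ) : Prop :=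
  ∃ i : Fin n, v i < u i ∧ ∀ l : Fin n, l < i → u l = v l

/-- A monomial ideal: an ideal generated by monomials. -/
def IsMonomialIdeal {k : Type*} [Field k] {n : ℕ}
    (I : Ideal (MvPolynomial (Fin n) k)) : Prop :=
  ∃ A : Set (Fin n →₀ ℕ), I = Ideal.span ((fun m => (monomial m (1 : k))) '' A)

/-- A lex ideal: a monomial ideal such that in each degree its monomials form an
initial lex segment. -/
def IsLexIdeal {k : Type*} [Field k] {n : ℕ}
    (I : Ideal (MvPolynomial (Fin n) k)) : Prop :=
  IsMonomialIdeal I ∧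
    ∀ u v : Fin n →₀ ℕ, expDeg u = expDeg v → LexGT u v →
      monomial v (1 : k) ∈ I → monomial u (1 : k) ∈ I

/-- An `xₙ`-stable monomial ideal (in `n+1` variables `x₁,…,x_{n+1}`,
with `xₙ` interpreted as the last variable). -/
def IsXnStable {k : Type*} [Field k] {n : ℕ}
    (I : Ideal (MvPolynomial (Fin (n + 1)) k)) : Prop :=
  IsMonomialIdeal I ∧
    ∀ u : Fin (n + 1) →₀ ℕ, monomial u (1 : k) ∈ I → 1 ≤ u (Fin.last n) →
      ∀ i : Fin (n + 1), i < Fin.last n →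
        monomial (u + Finsupp.single i 1 - Finsupp.single (Fin.last n) 1) (1 : k) ∈ I

/-- A degree sequence: entries in `ℕ ∪ {∞}`, at least 1, weakly increasing. -/
def IsDegSeq {n : ℕ} (d : Fin n → ℕ∞) : Prop :=
  (∀ i, 1 ≤ d i) ∧ Monotone d

/-- The ideal `(x₁^{d₁}, …, xₙ^{dₙ})`, where `xᵢ^∞ = 0` (so infinite entries
contribute nothing). -/
noncomputable def powersIdeal {n : ℕ} (k : Type*) [Field k] (d : Fin n → ℕ∞) :
    Ideal (MvPolynomial (Fin n) k) :=
  Ideal.span {f | ∃ (i : Fin n) (e : ℕ), d i = (e : ℕ∞) ∧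
    f = monomial (Finsupp.single i e) (1 : k)}

/-- A `d`-lex-plus-powers ideal. -/
def IsLPP {k : Type*} [Field k] {n : ℕ} (d : Fin n → ℕ∞)
    (I : Ideal (MvPolynomial (Fin n) k)) : Prop :=
  ∃ L, IsLexIdeal L ∧ I = L ⊔ powersIdeal k d

/-- A `d`-stable-plus-powers ideal. -/
def IsSPP {k : Type*} [Field k] {n : ℕ} (d : Fin (n + 1) → ℕ∞)
    (I : Ideal (MvPolynomial (Fin (n + 1)) k)) : Prop :=
  ∃ J, IsXnStable J ∧ I = J ⊔ powersIdeal k d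

/-- Hilbert function of a (homogeneous) ideal: `HF(I; j) = dim_k [I]_j`. -/
noncomputable def hfI {k : Type*} [Field k] {n : ℕ}
    (I : Ideal (MvPolynomial (Fin n) k)) (j : ℕ) : ℕ :=
  Module.finrank k
    ↥(I.restrictScalars k ⊓ homogeneousSubmodule (Fin n) k j)

/-- Hilbert function of the quotient: `HF(S/I; j) = dim_k [S/I]_j`. -/
noncomputable def hfQ {k : Type*} [Field k] {n : ℕ}
    (I : Ideal (MvPolynomial (Fin n) k)) (j : ℕ) : ℕ :=
  Module.finrank k
    (↥(homogeneousSubmodule (Fin n) k j) ⧸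
      Submodule.comap (homogeneousSubmodule (Fin n) k j).subtype (I.restrictScalars k))

/-- An ideal is homogeneous iff it contains all homogeneous components of its
elements. -/
def IsHomogeneousIdeal {k : Type*} [Field k] {n : ℕ}
    (I : Ideal (MvPolynomial (Fin n) k)) : Prop :=
  ∀ f ∈ I, ∀ j : ℕ, homogeneousComponent j f ∈ I

/-- The inclusion `S̄ = k[x₁,…,xₙ] → S = k[x₁,…,x_{n+1}]`. -/
noncomputable def inclHom (k : Type*) [Field k] (n : ℕ) :
    MvPolynomial (Fin n) k →+* MvPolynomial (Fin (n + 1)) k :=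
  (MvPolynomial.rename (Fin.castSucc : Fin n → Fin (n + 1))).toRingHom

/-- The `i`-th slice `Iᵢ ⊆ S̄` in the decomposition `I = ⊕ᵢ Iᵢ xₙⁱ`
of a monomial ideal `I ⊆ S = S̄[xₙ]`, defined as `(I : xₙⁱ) ∩ S̄`. -/
noncomputable def idealSlice {k : Type*} [Field k] {n : ℕ}
    (I : Ideal (MvPolynomial (Fin (n + 1)) k)) (i : ℕ) :
    Ideal (MvPolynomial (Fin n) k) :=
  Ideal.comap (inclHom k n)
    (Submodule.colon I (Ideal.span {(X (Fin.last n) : MvPolynomial (Fin (n + 1)) k) ^ i}))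

/-- The maximal homogeneous ideal `(x₁,…,xₙ)` of a polynomial ring. -/
noncomputable def maxIdeal (k : Type*) [Field k] (n : ℕ) :
    Ideal (MvPolynomial (Fin n) k) :=
  Ideal.span (Set.range (X : Fin n → MvPolynomial (Fin n) k))



namespace LPPAux

lemma expDeg_eq {n : ℕ} (m : Fin n →₀ ℕ) : expDeg m = ∑ i, m i := by
  rw [expDeg, Finsupp.sum_fintype]
  intro; rfl

lemma lexGT_iff {n : ℕ} (u v : Fin n →₀ ℕ) : LexGT u v ↔ toLex v < toLex u := by
  constructor
  · rintro ⟨i, hvi, hl⟩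
    exact ⟨i, fun d hd => (hl d hd).symm, hvi⟩
  · rintro ⟨i, hl, hvi⟩
    exact ⟨i, hvi, fun d hd => (hl d hd).symm⟩

lemma expDeg_mono {n : ℕ} {u v : Fin n →₀ ℕ} (h : u ≤ v) : expDeg u ≤ expDeg v := by
  rw [expDeg_eq, expDeg_eq]
  exact Finset.sum_le_sum fun i _ => h i

lemma eq_of_le_of_expDeg_eq {n : ℕ} {u v : Fin n →₀ ℕ} (h : u ≤ v)
    (hd : expDeg u = expDeg v) : u = v := by
  rw [expDeg_eq, expDeg_eq] at hd
  ext i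
  exact (Finset.sum_eq_sum_iff_of_le fun i _ => h i).mp hd i (Finset.mem_univ i)

lemma expDeg_add {n : ℕ} (u v : Fin n →₀ ℕ) : expDeg (u + v) = expDeg u + expDeg v := by
  simp [expDeg_eq, Finsupp.add_apply, Finset.sum_add_distrib]

lemma expDeg_single {n : ℕ} (i : Fin n) (e : ℕ) : expDeg (Finsupp.single i e) = e := by
  rw [expDeg_eq]
  simp [Finsupp.single_apply]

lemma sub_single_add {n : ℕ} {u : Fin n →₀ ℕ} {i : Fin n} (h : u i ≠ 0) :
    u - Finsupp.single i 1 + Finsupp.single i 1 = u := by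
  ext j
  simp only [Finsupp.add_apply, Finsupp.tsub_apply, Finsupp.single_apply]
  split_ifs with hji
  · subst hji; omega
  · omega

lemma expDeg_sub_single {n : ℕ} {u : Fin n →₀ ℕ} {i : Fin n} (h : u i ≠ 0) :
    expDeg (u - Finsupp.single i 1) = expDeg u - 1 := by
  conv_rhs => rw [← sub_single_add h]
  rw [expDeg_add, expDeg_single]
  omega

lemma sub_single_le {n : ℕ} (u : Fin n →₀ ℕ) (i : Fin n) : u - Finsupp.single i 1 ≤ u := by
  intro j
  simp only [Finsupp.tsub_apply]
  omega

lemma exists_lt_of_expDeg_lt {n : ℕ} {u v : Fin n →₀ ℕ} (h : expDeg u < expDeg v) :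
    ∃ i, u i < v i := by
  by_contra hc
  push_neg at hc
  have := expDeg_mono (u := v) (v := u) (fun i => hc i)
  omega

lemma expDeg_split {n : ℕ} (u : Fin n →₀ ℕ) (p : Fin n) :
    expDeg u = (∑ l ∈ Finset.univ.filter (· < p), u l) + u p
      + ∑ l ∈ Finset.univ.filter (p < ·), u l := by
  rw [expDeg_eq]
  rw [← Finset.sum_filter_add_sum_filter_not Finset.univ (· < p) (fun l => u l)]
  have : Finset.univ.filter (fun l => ¬ l < p) = insert p (Finset.univ.filter (p < ·)) := by
    ext l
    simp only [Finset.mem_filter, Finset.mem_univ, true_and, Finset.mem_insert, not_lt]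
    constructor
    · intro hl
      rcases eq_or_lt_of_le hl with h | h
      · exact Or.inl h.symm
      · exact Or.inr h
    · rintro (rfl | hl)
      · exact le_refl _
      · exact le_of_lt hl
  rw [this, Finset.sum_insert (by simp)]
  ring

end LPPAux

namespace LPPAux

lemma lt_toLex_iff {n : ℕ} {u v : Fin n →₀ ℕ} :
    toLex u < toLex v ↔ ∃ j, (∀ d, d < j → u d = v d) ∧ u j < v j := Iff.rfl

lemma toLex_single_last_le {n : ℕ} (i : Fin (n + 1)) :
    toLex (Finsupp.single (Fin.last n) 1 : Fin (n+1) →₀ ℕ) ≤ toLex (Finsupp.single i 1) := by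
  rcases eq_or_lt_of_le (Fin.le_last i) with h | h
  · rw [h]
  · apply le_of_lt
    rw [lt_toLex_iff]
    refine ⟨i, fun l hl => ?_, ?_⟩
    · have hll : l < Fin.last n := lt_trans hl h
      rw [Finsupp.single_apply, Finsupp.single_apply, if_neg (ne_of_gt hll), if_neg (ne_of_gt hl)]
    · rw [Finsupp.single_apply, Finsupp.single_apply, if_neg (ne_of_gt h), if_pos rfl]
      omega

/-- S' : any multiple `u` of `m` is lex-≥ the smallest conceivable multiple. -/
lemma lex_le_of_dvd {n : ℕ} (m : Fin (n+1) →₀ ℕ) :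
    ∀ (r : ℕ) (u : Fin (n+1) →₀ ℕ), m ≤ u → expDeg u = expDeg m + r →
      toLex (m + Finsupp.single (Fin.last n) r) ≤ toLex u := by
  intro r
  induction r with
  | zero =>
    intro u hle hdeg
    rw [Finsupp.single_zero, add_zero]
    exact le_of_eq (congrArg toLex (eq_of_le_of_expDeg_eq hle (by omega)))
  | succ r ih =>
    intro u hle hdeg
    obtain ⟨i, hi⟩ := exists_lt_of_expDeg_lt (u := m) (v := u) (by omega)
    have hui : u i ≠ 0 := by omega
    have hle' : m ≤ u - Finsupp.single i 1 := by
      intro j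
      have hmj : m j ≤ u j := hle j
      simp only [Finsupp.tsub_apply, Finsupp.single_apply]
      split_ifs with h
      · subst h; omega
      · omega
    have hdeg' : expDeg (u - Finsupp.single i 1) = expDeg m + r := by
      rw [expDeg_sub_single hui]; omega
    have h1 := ih (u - Finsupp.single i 1) hle' hdeg'
    have h2 : toLex (m + Finsupp.single (Fin.last n) r + Finsupp.single (Fin.last n) 1)
        ≤ toLex ((u - Finsupp.single i 1) + Finsupp.single (Fin.last n) 1) :=
      add_le_add h1 (le_refl _)
    have h3 : toLex ((u - Finsupp.single i 1) + Finsupp.single (Fin.last n) 1)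
        ≤ toLex ((u - Finsupp.single i 1) + Finsupp.single i 1) :=
      add_le_add (le_refl _) (toLex_single_last_le i)
    rw [sub_single_add hui] at h3
    calc toLex (m + Finsupp.single (Fin.last n) (r + 1))
        = toLex (m + Finsupp.single (Fin.last n) r + Finsupp.single (Fin.last n) 1) := by
          rw [Finsupp.single_add, add_assoc]
      _ ≤ _ := le_trans h2 h3

/-- single-step shadow lemma -/
lemma shadow_step {n : ℕ} (m' u : Fin (n+1) →₀ ℕ) (hdeg : expDeg u = expDeg m' + 1)
    (h : toLex (m' + Finsupp.single (Fin.last n) 1) ≤ toLex u) :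
    ∃ i, u i ≠ 0 ∧ toLex m' ≤ toLex (u - Finsupp.single i 1) := by
  rcases eq_or_lt_of_le h with heq | hlt
  · -- u = m' + e_last
    have hu : m' + Finsupp.single (Fin.last n) 1 = u := toLex.injective heq
    refine ⟨Fin.last n, ?_, le_of_eq (congrArg toLex ?_)⟩
    · rw [← hu]; simp
    · rw [← hu]
      ext j
      simp only [Finsupp.tsub_apply, Finsupp.add_apply, Finsupp.single_apply]
      split_ifs <;> omega
  · rw [lt_toLex_iff] at hlt
    obtain ⟨p, hbefore, hp⟩ := hlt
    simp only [Finsupp.add_apply, Finsupp.single_apply] at hp hbefore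
    have hup : u p ≠ 0 := by omega
    have hpmem : p ∈ u.support := Finsupp.mem_support_iff.mpr hup
    set q := u.support.max' ⟨p, hpmem⟩ with hq
    have hqmem : q ∈ u.support := u.support.max'_mem _
    have huq : u q ≠ 0 := Finsupp.mem_support_iff.mp hqmem
    have hpq : p ≤ q := u.support.le_max' p hpmem
    have hbeyond : ∀ l, q < l → u l = 0 := by
      intro l hl
      by_contra hc
      exact absurd (u.support.le_max' l (Finsupp.mem_support_iff.mpr hc)) (not_le.mpr hl)
    rcases eq_or_lt_of_le (Fin.le_last p) with hplast | hplast
    · -- p = last n : degree contradiction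
      exfalso
      have hbefore' : ∀ l, l < p → u l = m' l := by
        intro l hl
        have h5 := hbefore l hl
        rw [if_neg (by rw [hplast] at hl; exact (ne_of_gt hl))] at h5
        omega
      have hup2 : m' p + 2 ≤ u p := by
        rw [if_pos hplast.symm] at hp
        omega
      have hemp : Finset.univ.filter (p < ·) = (∅ : Finset (Fin (n+1))) := by
        ext l
        simp only [Finset.mem_filter, Finset.mem_univ, true_and, Finset.notMem_empty,
          iff_false, not_lt]
        rw [hplast]; exact Fin.le_last l
      have hsums : ∑ l ∈ Finset.univ.filter (· < p), u l
          = ∑ l ∈ Finset.univ.filter (· < p), m' l :=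
        Finset.sum_congr rfl (fun l hl => hbefore' l (Finset.mem_filter.mp hl).2)
      have h1 := expDeg_split u p
      have h2 := expDeg_split m' p
      rw [hemp, Finset.sum_empty] at h1 h2
      rw [hsums] at h1
      omega
    · -- p < last n
      have hpne : Fin.last n ≠ p := (ne_of_lt hplast).symm
      have hbefore' : ∀ l, l < p → u l = m' l := by
        intro l hl
        have h5 := hbefore l hl
        rw [if_neg (ne_of_gt (lt_trans hl hplast))] at h5
        omega
      have hp' : m' p < u p := by
        rw [if_neg hpne] at hp
        omega
      rcases eq_or_lt_of_le hpq with hpq' | hpq'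
      · -- p = q
        refine ⟨p, hup, ?_⟩
        rcases Nat.lt_or_ge (m' p) (u p - 1) with hcase | hcase
        · apply le_of_lt
          rw [lt_toLex_iff]
          refine ⟨p, fun l hl => ?_, ?_⟩
          · rw [Finsupp.tsub_apply, Finsupp.single_apply, if_neg (ne_of_gt hl),
              hbefore' l hl]
            omega
          · rw [Finsupp.tsub_apply, Finsupp.single_apply, if_pos rfl]; omega
        · -- equality case : u - e_p = m'
          apply le_of_eq
          apply congrArg toLex
          have hzero : ∀ l, p < l → u l = 0 := by
            intro l hl; exact hbeyond l (hpq' ▸ hl)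
          have hsums : ∑ l ∈ Finset.univ.filter (· < p), u l
              = ∑ l ∈ Finset.univ.filter (· < p), m' l :=
            Finset.sum_congr rfl (fun l hl => hbefore' l (Finset.mem_filter.mp hl).2)
          have hsums2 : ∑ l ∈ Finset.univ.filter (p < ·), u l = 0 :=
            Finset.sum_eq_zero (fun l hl => hzero l (Finset.mem_filter.mp hl).2)
          have h1 := expDeg_split u p
          have h2 := expDeg_split m' p
          rw [hsums, hsums2] at h1
          have hsum0 : ∑ l ∈ Finset.univ.filter (p < ·), m' l = 0 := by omega
          have hm'zero : ∀ l, p < l → m' l = 0 := by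
            intro l hl
            exact (Finset.sum_eq_zero_iff.mp hsum0) l
              (Finset.mem_filter.mpr ⟨Finset.mem_univ l, hl⟩)
          ext j
          rw [Finsupp.tsub_apply, Finsupp.single_apply]
          rcases lt_trichotomy j p with hj | hj | hj
          · rw [if_neg (ne_of_lt hj).symm, hbefore' j hj]
            omega
          · subst hj; rw [if_pos rfl]; omega
          · rw [if_neg (ne_of_lt hj), hzero j hj, hm'zero j hj]
            omega
      · -- p < q
        refine ⟨q, huq, ?_⟩
        apply le_of_lt
        rw [lt_toLex_iff]
        refine ⟨p, fun l hl => ?_, ?_⟩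
        · rw [Finsupp.tsub_apply, Finsupp.single_apply,
            if_neg (ne_of_gt (lt_trans hl hpq')), hbefore' l hl]
          omega
        · rw [Finsupp.tsub_apply, Finsupp.single_apply, if_neg (ne_of_gt hpq')]
          omega

/-- S : lex-above the minimal multiple implies having a divisor lex-above `m`. -/
lemma exists_dvd_of_lex_ge {n : ℕ} :
    ∀ (r : ℕ) (m u : Fin (n+1) →₀ ℕ), expDeg u = expDeg m + r →
      toLex (m + Finsupp.single (Fin.last n) r) ≤ toLex u →
      ∃ w, w ≤ u ∧ expDeg w = expDeg m ∧ toLex m ≤ toLex w := by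
  intro r
  induction r with
  | zero =>
    intro m u hdeg h
    rw [Finsupp.single_zero, add_zero] at h
    exact ⟨u, le_refl u, by omega, h⟩
  | succ r ih =>
    intro m u hdeg h
    have h' : toLex ((m + Finsupp.single (Fin.last n) r) + Finsupp.single (Fin.last n) 1)
        ≤ toLex u := by
      rw [add_assoc, ← Finsupp.single_add]
      exact h
    have hdeg' : expDeg u = expDeg (m + Finsupp.single (Fin.last n) r) + 1 := by
      rw [expDeg_add, expDeg_single]; omega
    obtain ⟨i, hui, h2⟩ := shadow_step _ u hdeg' h'
    obtain ⟨w, hw1, hw2, hw3⟩ := ih m (u - Finsupp.single i 1)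
      (by rw [expDeg_sub_single hui]; omega) h2
    exact ⟨w, le_trans hw1 (sub_single_le u i), hw2, hw3⟩

end LPPAux

namespace LPPAux

variable {k : Type*} [Field k] {N : ℕ}

lemma mono_mem_span_iff (s : Set (Fin N →₀ ℕ)) (c : Fin N →₀ ℕ) :
    monomial c (1 : k) ∈ Ideal.span ((fun m => monomial m (1 : k)) '' s) ↔ ∃ m ∈ s, m ≤ c := by
  rw [mem_ideal_span_monomial_image]
  simp [support_monomial]

lemma mono_mem_mono {I : Ideal (MvPolynomial (Fin N) k)} {m c : Fin N →₀ ℕ}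
    (h : m ≤ c) (hm : monomial m (1 : k) ∈ I) : monomial c (1 : k) ∈ I := by
  have : monomial c (1 : k) = monomial (c - m) 1 * monomial m 1 := by
    rw [monomial_mul, one_mul, tsub_add_cancel_of_le h]
  rw [this]
  exact Ideal.mul_mem_left _ _ hm

lemma monomialIdeal_eq_span {I : Ideal (MvPolynomial (Fin N) k)} (hI : IsMonomialIdeal I) :
    I = Ideal.span ((fun m => monomial m (1 : k)) '' {c | monomial c (1 : k) ∈ I}) := by
  obtain ⟨A, rfl⟩ := hI
  apply le_antisymm
  · apply Ideal.span_mono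
    apply Set.image_mono
    intro a ha
    exact Ideal.subset_span (Set.mem_image_of_mem _ ha)
  · rw [Ideal.span_le]
    rintro f ⟨c, hc, rfl⟩
    exact hc

lemma mem_colon_span {R : Type*} [CommRing R] (M : Ideal R) (s : Set R) (r : R) :
    r ∈ Submodule.colon M (Ideal.span s) ↔ ∀ p ∈ s, r * p ∈ M := by
  constructor
  · intro h p hp
    rw [← smul_eq_mul]
    exact Submodule.mem_colon.mp h p (Ideal.subset_span hp)
  · intro h
    rw [Submodule.mem_colon]
    intro p hp
    induction hp using Submodule.span_induction with
    | mem x hx => exact h x hx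
    | zero => simp
    | add x y _ _ hx hy => rw [smul_add]; exact M.add_mem hx hy
    | smul a x _ hx => rw [smul_comm]; exact M.smul_mem a hx

lemma mono_mem_sup (s t : Set (Fin N →₀ ℕ)) (c : Fin N →₀ ℕ) :
    monomial c (1 : k) ∈ Ideal.span ((fun m => monomial m (1 : k)) '' s)
        ⊔ Ideal.span ((fun m => monomial m (1 : k)) '' t)
      ↔ monomial c (1 : k) ∈ Ideal.span ((fun m => monomial m (1 : k)) '' s)
        ∨ monomial c (1 : k) ∈ Ideal.span ((fun m => monomial m (1 : k)) '' t) := by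
  rw [← Ideal.span_union, ← Set.image_union, mono_mem_span_iff, mono_mem_span_iff,
    mono_mem_span_iff]
  constructor
  · rintro ⟨m, hm | hm, hle⟩
    · exact Or.inl ⟨m, hm, hle⟩
    · exact Or.inr ⟨m, hm, hle⟩
  · rintro (⟨m, hm, hle⟩ | ⟨m, hm, hle⟩)
    · exact ⟨m, Or.inl hm, hle⟩
    · exact ⟨m, Or.inr hm, hle⟩

end LPPAux

namespace LPPAux

variable {k : Type*} [Field k] {N : ℕ}

/-- the "powers" generating set -/
def PSet (D : Fin N → ℕ) : Set (Fin N →₀ ℕ) := {m | ∃ i, m = Finsupp.single i (D i)}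

/-- the powers ideal, with ℕ exponents -/
noncomputable def Pid (k : Type*) [Field k] (D : Fin N → ℕ) : Ideal (MvPolynomial (Fin N) k) :=
  Ideal.span ((fun m => monomial m (1 : k)) '' PSet D)

/-- the box predicate -/
def Box (D : Fin N → ℕ) (c : Fin N →₀ ℕ) : Prop := ∀ i, c i < D i

/-- exponent vector of the socle monomial -/
noncomputable def dmax (D : Fin N → ℕ) : Fin N →₀ ℕ := Finsupp.equivFunOnFinite.symm (fun i => D i - 1)

lemma dmax_apply (D : Fin N → ℕ) (i : Fin N) : dmax D i = D i - 1 := by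
  simp [dmax]

lemma mem_Pid_iff (D : Fin N → ℕ) (c : Fin N →₀ ℕ) :
    monomial c (1 : k) ∈ Pid k D ↔ ∃ i, D i ≤ c i := by
  rw [Pid, mono_mem_span_iff]
  constructor
  · rintro ⟨m, ⟨i, rfl⟩, hle⟩
    refine ⟨i, ?_⟩
    have := hle i
    rwa [Finsupp.single_apply, if_pos rfl] at this
  · rintro ⟨i, h⟩
    refine ⟨Finsupp.single i (D i), ⟨i, rfl⟩, ?_⟩
    intro j
    rw [Finsupp.single_apply]
    split_ifs with hij
    · subst hij; exact h
    · exact Nat.zero_le _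

lemma not_mem_Pid_iff (D : Fin N → ℕ) (c : Fin N →₀ ℕ) :
    monomial c (1 : k) ∉ Pid k D ↔ Box D c := by
  rw [mem_Pid_iff]
  push_neg
  rfl

lemma box_dual (D : Fin N → ℕ) (hD1 : ∀ i, 1 ≤ D i) (c : Fin N →₀ ℕ) :
    Box D (dmax D - c) := by
  intro i
  rw [Finsupp.tsub_apply, dmax_apply]
  have := hD1 i
  omega

lemma dual_dual {D : Fin N → ℕ} {c : Fin N →₀ ℕ} (hc : Box D c) :
    dmax D - (dmax D - c) = c := by
  ext i
  have := hc i
  rw [Finsupp.tsub_apply, Finsupp.tsub_apply, dmax_apply]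
  omega

lemma add_dual {D : Fin N → ℕ} {c : Fin N →₀ ℕ} (hc : Box D c) :
    c + (dmax D - c) = dmax D := by
  ext i
  have := hc i
  rw [Finsupp.add_apply, Finsupp.tsub_apply, dmax_apply]
  omega

lemma expDeg_dual {D : Fin N → ℕ} {c u : Fin N →₀ ℕ} (hc : Box D c) (hu : Box D u)
    (h : expDeg c = expDeg u) : expDeg (dmax D - c) = expDeg (dmax D - u) := by
  have h1 := congrArg expDeg (add_dual hc)
  have h2 := congrArg expDeg (add_dual hu)
  rw [expDeg_add] at h1 h2
  omega

lemma dual_lexGT {D : Fin N → ℕ} {c u : Fin N →₀ ℕ} (hc : Box D c) (hu : Box D u)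
    (h : LexGT u c) : LexGT (dmax D - c) (dmax D - u) := by
  obtain ⟨i, hlt, hbefore⟩ := h
  refine ⟨i, ?_, ?_⟩
  · rw [Finsupp.tsub_apply, Finsupp.tsub_apply, dmax_apply]
    have := hu i
    omega
  · intro l hl
    rw [Finsupp.tsub_apply, Finsupp.tsub_apply, hbefore l hl]

variable (D : Fin N → ℕ)

lemma Pid_le_colon (I : Ideal (MvPolynomial (Fin N) k)) :
    Pid k D ≤ Submodule.colon (Pid k D) I := by
  intro p hp
  rw [Submodule.mem_colon]
  intro q _
  rw [smul_eq_mul]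
  exact Ideal.mul_mem_right q _ hp

lemma mono_mem_colon_iff {I : Ideal (MvPolynomial (Fin N) k)} (hI : IsMonomialIdeal I)
    (c : Fin N →₀ ℕ) :
    monomial c (1 : k) ∈ Submodule.colon (Pid k D) I
      ↔ ∀ a : Fin N →₀ ℕ, monomial a (1 : k) ∈ I → ∃ i, D i ≤ c i + a i := by
  conv_lhs => rw [monomialIdeal_eq_span hI]
  rw [mem_colon_span]
  constructor
  · intro h a ha
    have := h (monomial a 1) (Set.mem_image_of_mem _ ha)
    rw [monomial_mul, one_mul, mem_Pid_iff] at this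
    simpa using this
  · rintro h f ⟨a, ha, rfl⟩
    rw [monomial_mul, one_mul, mem_Pid_iff]
    simpa using h a ha

lemma colon_mono_char {I : Ideal (MvPolynomial (Fin N) k)} (hI : IsMonomialIdeal I)
    (c : Fin N →₀ ℕ) :
    monomial c (1 : k) ∈ Submodule.colon (Pid k D) I
      ↔ (¬ Box D c) ∨ monomial (dmax D - c) (1 : k) ∉ I := by
  constructor
  · intro h
    by_cases hbox : Box D c
    · refine Or.inr (fun hmem => ?_)
      obtain ⟨i, hi⟩ := (mono_mem_colon_iff D hI c).mp h _ hmem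
      rw [Finsupp.tsub_apply, dmax_apply] at hi
      have := hbox i
      omega
    · exact Or.inl hbox
  · rintro (hbox | hnot)
    · apply Pid_le_colon
      rw [mem_Pid_iff]
      unfold Box at hbox
      push_neg at hbox
      obtain ⟨i, hi⟩ := hbox
      exact ⟨i, hi⟩
    · rw [mono_mem_colon_iff D hI c]
      intro a ha
      by_contra hcon
      push_neg at hcon
      apply hnot
      apply mono_mem_mono (m := a) _ ha
      intro i
      rw [Finsupp.tsub_apply, dmax_apply]
      have := hcon i
      omega

lemma colon_mono_closed {I : Ideal (MvPolynomial (Fin N) k)} (hI : IsMonomialIdeal I)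
    {f : MvPolynomial (Fin N) k} (hf : f ∈ Submodule.colon (Pid k D) I)
    {c : Fin N →₀ ℕ} (hc : c ∈ f.support) :
    monomial c (1 : k) ∈ Submodule.colon (Pid k D) I := by
  rw [mono_mem_colon_iff D hI c]
  intro a ha
  have hfa : f * monomial a 1 ∈ Pid k D := by
    rw [← smul_eq_mul]
    exact Submodule.mem_colon.mp hf _ ha
  have hsupp : c + a ∈ (f * monomial a 1).support := by
    rw [mem_support_iff, coeff_mul_monomial, mul_one]
    exact mem_support_iff.mp hc
  obtain ⟨m, ⟨i, rfl⟩, hle⟩ := mem_ideal_span_monomial_image.mp hfa _ hsupp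
  refine ⟨i, ?_⟩
  have := hle i
  rw [Finsupp.single_apply, if_pos rfl, Finsupp.add_apply] at this
  exact this

lemma colon_eq_span {I : Ideal (MvPolynomial (Fin N) k)} (hI : IsMonomialIdeal I) :
    Submodule.colon (Pid k D) I
      = Ideal.span ((fun m => monomial m (1 : k))
          '' {c | monomial c (1 : k) ∈ Submodule.colon (Pid k D) I}) := by
  apply le_antisymm
  · intro f hf
    rw [mem_ideal_span_monomial_image]
    intro c hc
    exact ⟨c, colon_mono_closed D hI hf hc, le_refl c⟩
  · rw [Ideal.span_le]
    rintro f ⟨c, hc, rfl⟩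
    exact hc

lemma colon_isMonomial {I : Ideal (MvPolynomial (Fin N) k)} (hI : IsMonomialIdeal I) :
    IsMonomialIdeal (Submodule.colon (Pid k D) I) :=
  ⟨_, colon_eq_span D hI⟩

/-- two monomial ideals with the same monomials are equal -/
lemma monomialIdeal_ext {I J : Ideal (MvPolynomial (Fin N) k)}
    (hI : IsMonomialIdeal I) (hJ : IsMonomialIdeal J)
    (h : ∀ c : Fin N →₀ ℕ, monomial c (1 : k) ∈ I ↔ monomial c (1 : k) ∈ J) : I = J := by
  rw [monomialIdeal_eq_span hI, monomialIdeal_eq_span hJ]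
  congr 1
  ext f
  constructor
  · rintro ⟨c, hc, rfl⟩
    exact ⟨c, (h c).mp hc, rfl⟩
  · rintro ⟨c, hc, rfl⟩
    exact ⟨c, (h c).mpr hc, rfl⟩

end LPPAux

namespace LPPAux

variable {k : Type*} [Field k] {N : ℕ}

lemma Pid_isMonomial (D : Fin N → ℕ) : IsMonomialIdeal (Pid k D) := ⟨PSet D, rfl⟩

lemma mono_mem_sup' {L P : Ideal (MvPolynomial (Fin N) k)}
    (hL : IsMonomialIdeal L) (hP : IsMonomialIdeal P) (c : Fin N →₀ ℕ) :
    monomial c (1 : k) ∈ L ⊔ P ↔ monomial c (1 : k) ∈ L ∨ monomial c (1 : k) ∈ P := by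
  conv_lhs => rw [monomialIdeal_eq_span hL, monomialIdeal_eq_span hP]
  rw [mono_mem_sup]
  constructor
  · rintro (h | h)
    · exact Or.inl (by rwa [← monomialIdeal_eq_span hL] at h)
    · exact Or.inr (by rwa [← monomialIdeal_eq_span hP] at h)
  · rintro (h | h)
    · exact Or.inl (by rwa [← monomialIdeal_eq_span hL])
    · exact Or.inr (by rwa [← monomialIdeal_eq_span hP])

/-- Master lemma: the link of an LPP ideal (w.r.t. the ℕ-valued powers ideal) is LPP. -/
lemma master {n : ℕ} (D : Fin (n+1) → ℕ) (hD1 : ∀ i, 1 ≤ D i)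
    {I : Ideal (MvPolynomial (Fin (n+1)) k)} (hI : IsMonomialIdeal I)
    (hLPP : ∃ L, IsLexIdeal L ∧ I = L ⊔ Pid k D) :
    ∃ L', IsLexIdeal L' ∧ Submodule.colon (Pid k D) I = L' ⊔ Pid k D := by
  classical
  obtain ⟨L, ⟨hLmon, hLlex⟩, hIeq⟩ := hLPP
  set J := Submodule.colon (Pid k D) I with hJdef
  set G : Set (Fin (n+1) →₀ ℕ) :=
    {u | ∃ c, Box D c ∧ monomial c (1 : k) ∈ J ∧ expDeg c = expDeg u ∧ toLex c ≤ toLex u}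
    with hGdef
  refine ⟨Ideal.span ((fun m => monomial m (1 : k)) '' G), ⟨⟨G, rfl⟩, ?_⟩, ?_⟩
  · -- lex property
    intro u v hdeg hGT hv
    rw [mono_mem_span_iff] at hv ⊢
    obtain ⟨g, ⟨c, hcbox, hcJ, hcdeg, hclex⟩, hgle⟩ := hv
    have hgdeg : expDeg g ≤ expDeg v := expDeg_mono hgle
    set r := expDeg v - expDeg g with hr
    have h1 : toLex (g + Finsupp.single (Fin.last n) r) ≤ toLex v :=
      lex_le_of_dvd g r v hgle (by omega)
    have h2 : toLex (c + Finsupp.single (Fin.last n) r)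
        ≤ toLex (g + Finsupp.single (Fin.last n) r) := add_le_add hclex (le_refl _)
    have h3 : toLex v ≤ toLex u := le_of_lt ((lexGT_iff u v).mp hGT)
    have htot : toLex (c + Finsupp.single (Fin.last n) r) ≤ toLex u :=
      le_trans h2 (le_trans h1 h3)
    obtain ⟨w, hwle, hwdeg, hwlex⟩ := exists_dvd_of_lex_ge r c u (by omega) htot
    exact ⟨w, ⟨c, hcbox, hcJ, hwdeg.symm, hwlex⟩, hwle⟩
  · -- J = L' + P
    apply le_antisymm
    · -- J ≤ L' ⊔ P
      conv_lhs => rw [hJdef, colon_eq_span D hI]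
      rw [Ideal.span_le]
      rintro f ⟨c, hcJ, rfl⟩
      by_cases hbox : Box D c
      · apply Ideal.mem_sup_left
        apply Ideal.subset_span
        exact ⟨c, ⟨c, hbox, hcJ, rfl, le_refl _⟩, rfl⟩
      · apply Ideal.mem_sup_right
        rw [mem_Pid_iff]
        unfold Box at hbox
        push_neg at hbox
        exact hbox
    · -- L' ⊔ P ≤ J
      apply sup_le _ (Pid_le_colon D I)
      rw [Ideal.span_le]
      rintro f ⟨u, ⟨c, hcbox, hcJ, hcdeg, hclex⟩, rfl⟩
      by_cases hbox : Box D u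
      · show monomial u (1 : k) ∈ Submodule.colon (Pid k D) I
        rw [colon_mono_char D hI]
        refine Or.inr (fun hmem => ?_)
        have hnotin : monomial (dmax D - c) (1 : k) ∉ I := by
          rcases (colon_mono_char D hI c).mp hcJ with h | h
          · exact absurd hcbox h
          · exact h
        rcases eq_or_lt_of_le hclex with heq | hlt
        · exact hnotin (toLex.injective heq ▸ hmem)
        · have hGTuc : LexGT u c := (lexGT_iff u c).mpr hlt
          have hdualGT : LexGT (dmax D - c) (dmax D - u) := dual_lexGT hcbox hbox hGTuc
          have hdualdeg : expDeg (dmax D - c) = expDeg (dmax D - u) :=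
            expDeg_dual hcbox hbox hcdeg
          rw [hIeq] at hmem
          rcases (mono_mem_sup' hLmon (Pid_isMonomial D) _).mp hmem with hL | hP
          · apply hnotin
            rw [hIeq]
            exact Ideal.mem_sup_left (hLlex _ _ hdualdeg hdualGT hL)
          · exact (not_mem_Pid_iff (k := k) D _).mpr (box_dual D hD1 u) hP
      · show monomial u (1 : k) ∈ Submodule.colon (Pid k D) I
        apply Pid_le_colon
        rw [mem_Pid_iff]
        unfold Box at hbox
        push_neg at hbox
        exact hbox

/-- double colon gives back a monomial ideal containing the powers ideal -/
lemma colon_colon {n : ℕ} (D : Fin n → ℕ) (hD1 : ∀ i, 1 ≤ D i)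
    {I : Ideal (MvPolynomial (Fin n) k)} (hI : IsMonomialIdeal I)
    (hPI : Pid k D ≤ I) :
    Submodule.colon (Pid k D) (Submodule.colon (Pid k D) I) = I := by
  classical
  apply monomialIdeal_ext (colon_isMonomial D (colon_isMonomial D hI)) hI
  intro c
  rw [colon_mono_char D (colon_isMonomial D hI) c]
  by_cases hbox : Box D c
  · have hJ : monomial (dmax D - c) (1 : k) ∈ Submodule.colon (Pid k D) I
        ↔ monomial c (1 : k) ∉ I := by
      rw [colon_mono_char D hI]
      constructor
      · rintro (h | h)
        · exact absurd (box_dual D hD1 c) h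
        · rwa [dual_dual hbox] at h
      · intro h
        refine Or.inr ?_
        rwa [dual_dual hbox]
    constructor
    · rintro (h | h)
      · exact absurd hbox h
      · by_contra hc
        exact h (hJ.mpr hc)
    · intro h
      refine Or.inr (fun hc => (hJ.mp hc) h)
  · constructor
    · intro _
      apply hPI
      rw [mem_Pid_iff]
      unfold Box at hbox
      push_neg at hbox
      exact hbox
    · intro _
      exact Or.inl hbox

end LPPAux


/-- Let `d` be a degree sequence with `d_{n+1} < ∞`,
`℘ = (x₁^{d₁},…,x_{n+1}^{d_{n+1}})`, `I` a monomial ideal with `℘ ⊊ I ⊊ S`, and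
`J = ℘ : I`. Then `I` is `d`-lex-plus-powers iff `J` is `d`-lex-plus-powers. -/
theorem isLPP_iff_isLPP_link
    {k : Type*} [Field k] {n : ℕ} (d : Fin (n + 1) → ℕ∞) (hd : IsDegSeq d)
    (e : ℕ) (he : d (Fin.last n) = (e : ℕ∞))
    (I : Ideal (MvPolynomial (Fin (n + 1)) k)) (hI : IsMonomialIdeal I)
    (hlt : powersIdeal k d < I) (hne : I ≠ ⊤)
    (J : Ideal (MvPolynomial (Fin (n + 1)) k))
    (hJ : J = Submodule.colon (powersIdeal k d) I) :
    IsLPP d I ↔ IsLPP d J := by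
  classical
  set D : Fin (n + 1) → ℕ := fun i => (d i).toNat with hDdef
  have hfin : ∀ i, d i = (D i : ℕ∞) := by
    intro i
    have hle : d i ≤ (e : ℕ∞) := he ▸ hd.2 (Fin.le_last i)
    have hnt : d i ≠ ⊤ := ne_top_of_le_ne_top (by simp) hle
    exact (ENat.coe_toNat hnt).symm
  have hD1 : ∀ i, 1 ≤ D i := by
    intro i
    have h1 := hd.1 i
    rw [hfin i] at h1
    exact_mod_cast h1
  have hPeq : powersIdeal k d = LPPAux.Pid k D := by
    unfold powersIdeal LPPAux.Pid LPPAux.PSet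
    congr 1
    ext f
    simp only [Set.mem_setOf_eq, Set.mem_image]
    constructor
    · rintro ⟨i, e', he', rfl⟩
      have he'' : e' = D i := by
        have h9 := (hfin i).symm.trans he'
        exact_mod_cast h9.symm
      exact ⟨Finsupp.single i (D i), ⟨i, rfl⟩, by rw [he'']⟩
    · rintro ⟨m, ⟨i, rfl⟩, rfl⟩
      exact ⟨i, D i, hfin i, rfl⟩
  have hPI : LPPAux.Pid k D ≤ I := hPeq ▸ le_of_lt hlt
  have hJmon : IsMonomialIdeal J := by
    rw [hJ, hPeq]
    exact LPPAux.colon_isMonomial D hI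
  constructor
  · rintro ⟨L, hL, hIL⟩
    obtain ⟨L', hL', hJL'⟩ := LPPAux.master D hD1 hI ⟨L, hL, by rw [hIL, hPeq]⟩
    exact ⟨L', hL', by rw [hJ, hPeq, hJL']⟩
  · rintro ⟨L, hL, hJL⟩
    obtain ⟨L', hL', hIL'⟩ := LPPAux.master D hD1 hJmon ⟨L, hL, by rw [hJL, hPeq]⟩
    have hcc : Submodule.colon (LPPAux.Pid k D) J = I := by
      rw [hJ, hPeq]
      exact LPPAux.colon_colon D hD1 hI hPI
    rw [hcc] at hIL'
    exact ⟨L', hL', by rw [hIL', hPeq]⟩
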